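/- Let $d \geq 2$ and $k \geq 1$, let $V_i = V_i^1 \oplus \cdots \oplus V_i^k$ for $i=1,\dots,d$ be finite-dimensional vector spaces, and let $T \in V_1 \otimes \cdots \otimes V_d$ be block upper triangular, meaning the component $T^\alpha \in V_1^{\alpha_1} \otimes \cdots \otimes V_d^{\alpha_d}$ is nonzero only for weakly increasing sequences $\alpha \in [k]^d$. Then $\sigma(T) \geq \sigma(T^{(1,\dots,1)}) + \sigma(T^{(2,\dots,2)}) + \cdots + \sigma(T^{(k,\dots,k)})$. -/

import Mathlib

open scoped TensorProduct BigOperators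

/-- Slice rank of a tensor in a tensor product of vector spaces. -/
noncomputable def tensorSliceRank (F : Type*) [Field F] {d : ℕ} (V : Fin d → Type*)
    [∀ i, AddCommGroup (V i)] [∀ i, Module F (V i)] (T : ⨂[F] i, V i) : ℕ :=
  sInf {r | ∃ S : Fin r → ⨂[F] i, V i,
    (∀ j, ∃ i : Fin d, ∃ u : V i,
      S j ∈ Submodule.span F {t | ∃ v : ∀ k, V k, v i = u ∧ t = PiTensorProduct.tprod F v}) ∧
    T = ∑ j, S j}

namespace SliceAux


variable {F : Type*} [Field F] {d : ℕ} {V : Fin d → Type*}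
  [∀ i, AddCommGroup (V i)] [∀ i, Module F (V i)]

/-- Span of slices in direction `i` with fixed vector `u`. -/
def sliceSpan (i : Fin d) (u : V i) : Submodule F (⨂[F] i, V i) :=
  Submodule.span F {t | ∃ v : ∀ k, V k, v i = u ∧ t = PiTensorProduct.tprod F v}

/-- Span of slices in direction `i` with vector in a subspace `A`. -/
def sliceSub (i : Fin d) (A : Submodule F (V i)) : Submodule F (⨂[F] i, V i) :=
  Submodule.span F {t | ∃ v : ∀ k, V k, v i ∈ A ∧ t = PiTensorProduct.tprod F v}

lemma sliceSub_mono (i : Fin d) {A B : Submodule F (V i)} (h : A ≤ B) :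
    sliceSub i A ≤ sliceSub (F := F) i B := by
  apply Submodule.span_mono
  rintro t ⟨v, hv, rfl⟩
  exact ⟨v, h hv, rfl⟩

lemma sliceSpan_le_sliceSub (i : Fin d) (u : V i) (A : Submodule F (V i)) (h : u ∈ A) :
    sliceSpan (F := F) i u ≤ sliceSub i A := by
  apply Submodule.span_mono
  rintro t ⟨v, hv, rfl⟩
  exact ⟨v, hv ▸ h, rfl⟩

variable {Z : Fin d → Type*} [∀ i, AddCommGroup (Z i)] [∀ i, Module F (Z i)]

lemma map_eq_zero_of_component (f : ∀ i, V i →ₗ[F] Z i) (i : Fin d) (h : f i = 0) :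
    PiTensorProduct.map f = 0 := by
  ext v
  simp only [LinearMap.compMultilinearMap_apply, PiTensorProduct.map_tprod,
    LinearMap.zero_apply]
  exact MultilinearMap.map_coord_zero _ i (by simp [h])

lemma sliceSub_le_ker (f : ∀ i, V i →ₗ[F] Z i) (i : Fin d) (A : Submodule F (V i))
    (h : A ≤ LinearMap.ker (f i)) :
    sliceSub i A ≤ LinearMap.ker (PiTensorProduct.map f) := by
  rw [sliceSub, Submodule.span_le]
  rintro t ⟨v, hv, rfl⟩
  simp only [SetLike.mem_coe, LinearMap.mem_ker, PiTensorProduct.map_tprod]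
  exact MultilinearMap.map_coord_zero _ i (by simpa using h hv)

/-- Key lemma: if a tensor is killed by `⊗ᵢ φᵢ`, then it lies in the sum of the slice
ideals generated by the kernels. -/
theorem mem_iSup_sliceSub_of_map_eq_zero (φ : ∀ i, V i →ₗ[F] Z i) (S : ⨂[F] i, V i)
    (h : PiTensorProduct.map φ S = 0) :
    S ∈ ⨆ i, sliceSub i (LinearMap.ker (φ i)) := by
  classical
  -- choose complements of the kernels
  choose D hD using fun i => Submodule.exists_isCompl (LinearMap.ker (φ i))
  set X : Submodule F (⨂[F] i, V i) := ⨆ i, sliceSub i (LinearMap.ker (φ i)) with hX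
  -- spanD s : span of pure tensors whose coordinates in s lie in the complements
  set spanD : Finset (Fin d) → Submodule F (⨂[F] i, V i) := fun s =>
    Submodule.span F {t | ∃ v : ∀ k, V k, (∀ i ∈ s, v i ∈ D i) ∧ t = PiTensorProduct.tprod F v}
    with hspanD
  have hstep : ∀ s : Finset (Fin d), S ∈ X ⊔ spanD s := by
    intro s
    induction s using Finset.induction with
    | empty =>
      have : spanD ∅ = ⊤ := by
        rw [hspanD]
        rw [eq_top_iff, ← PiTensorProduct.span_tprod_eq_top]
        apply Submodule.span_mono
        rintro t ⟨v, rfl⟩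
        exact ⟨v, by simp, rfl⟩
      rw [this]
      simp
    | @insert a s ha ih =>
      refine SetLike.le_def.mp ?_ ih
      apply sup_le (le_sup_left)
      rw [hspanD, Submodule.span_le]
      rintro t ⟨v, hv, rfl⟩
      -- decompose v a into kernel + complement parts
      have hva : v a ∈ LinearMap.ker (φ a) ⊔ D a := by
        rw [(hD a).sup_eq_top]; trivial
      obtain ⟨x, hx, y, hy, hxy⟩ := Submodule.mem_sup.mp hva
      have hv' : v = Function.update v a (x + y) := by
        rw [hxy, Function.update_eq_self]
      have : PiTensorProduct.tprod F v =
          PiTensorProduct.tprod F (Function.update v a x) +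
          PiTensorProduct.tprod F (Function.update v a y) := by
        conv_lhs => rw [hv']
        exact MultilinearMap.map_update_add _ v a x y
      rw [SetLike.mem_coe, this]
      apply Submodule.add_mem
      · apply SetLike.le_def.mp le_sup_left
        apply SetLike.le_def.mp (le_iSup _ a : _ ≤ X)
        exact Submodule.subset_span ⟨_, by simp [hx], rfl⟩
      · apply SetLike.le_def.mp le_sup_right
        apply Submodule.subset_span
        refine ⟨_, fun i hi => ?_, rfl⟩
        rcases Finset.mem_insert.mp hi with rfl | hi'
        · simpa using hy
        · by_cases hia : i = a
          · subst hia; simpa using hy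
          · simpa [Function.update_of_ne hia] using hv i hi'
  -- now S = S₁ + S₂ with S₂ in spanD univ
  obtain ⟨S₁, hS₁, S₂, hS₂, rfl⟩ := Submodule.mem_sup.mp (hstep Finset.univ)
  -- S₂ is in the range of the inclusion of the complements
  have hrange : S₂ ∈ LinearMap.range (PiTensorProduct.map (fun i => (D i).subtype)) := by
    revert hS₂
    rw [hspanD]
    refine fun hS₂ => SetLike.le_def.mp ?_ hS₂
    rw [Submodule.span_le]
    rintro t ⟨v, hv, rfl⟩
    exact ⟨PiTensorProduct.tprod F (fun i => (⟨v i, hv i (Finset.mem_univ i)⟩ : D i)), by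
      simp [PiTensorProduct.map_tprod]⟩
  obtain ⟨c, hc⟩ := hrange
  -- φ ∘ inclusion is injective on complements; pick left inverses
  have hinj : ∀ i, LinearMap.ker ((φ i) ∘ₗ (D i).subtype) = ⊥ := by
    intro i
    rw [LinearMap.ker_eq_bot']
    intro m hm
    have : (m : V i) ∈ LinearMap.ker (φ i) ⊓ D i := ⟨hm, m.2⟩
    rw [(hD i).inf_eq_bot] at this
    exact Subtype.ext this
  choose g hg using fun i => LinearMap.exists_leftInverse_of_injective _ (hinj i)
  -- map φ S₂ = 0
  have hmapS₁ : PiTensorProduct.map φ S₁ = 0 := by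
    have : X ≤ LinearMap.ker (PiTensorProduct.map φ) := by
      rw [hX]
      exact iSup_le fun i => sliceSub_le_ker φ i _ le_rfl
    exact this hS₁
  have hmapS₂ : PiTensorProduct.map φ S₂ = 0 := by
    have := h
    rw [map_add, hmapS₁, zero_add] at this
    exact this
  -- conclude c = 0
  have hc0 : c = 0 := by
    have h1 : PiTensorProduct.map (fun i => (φ i) ∘ₗ (D i).subtype) c = 0 := by
      rw [PiTensorProduct.map_comp]
      simp only [LinearMap.comp_apply]
      rw [hc]
      exact hmapS₂
    have h2 : PiTensorProduct.map (fun i => (g i) ∘ₗ ((φ i) ∘ₗ (D i).subtype)) c = c := by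
      have : (fun i => (g i) ∘ₗ ((φ i) ∘ₗ (D i).subtype)) =
          fun i => (LinearMap.id : D i →ₗ[F] D i) := by
        funext i; exact hg i
      rw [this, PiTensorProduct.map_id, LinearMap.id_apply]
    rw [← h2, PiTensorProduct.map_comp, LinearMap.comp_apply, h1, map_zero]
  rw [hc0, map_zero] at hc
  rw [← hc, add_zero]
  exact hS₁

/-- A sum-of-slices witness: `r` is in the defining set of `tensorSliceRank`. -/
lemma mem_rank_set_of_mem_iSup (A : ∀ i, Submodule F (V i))
    [∀ i, FiniteDimensional F (V i)]
    (T : ⨂[F] i, V i) (h : T ∈ ⨆ i, sliceSub i (A i)) :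
    (∑ i, Module.finrank F (A i)) ∈ {r | ∃ S : Fin r → ⨂[F] i, V i,
    (∀ j, ∃ i : Fin d, ∃ u : V i,
      S j ∈ Submodule.span F {t | ∃ v : ∀ k, V k, v i = u ∧ t = PiTensorProduct.tprod F v}) ∧
    T = ∑ j, S j} := by
  classical
  set n : Fin d → ℕ := fun i => Module.finrank F (A i) with hn
  set b : ∀ i, Module.Basis (Fin (n i)) F (A i) := fun i => Module.finBasis F (A i) with hb
  have hsub : ∀ i, sliceSub i (A i) ≤
      ⨆ p : Σ i : Fin d, Fin (n i), sliceSpan p.1 ((b p.1 p.2 : A p.1) : V p.1) := by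
    intro i
    rw [sliceSub, Submodule.span_le]
    rintro t ⟨v, hv, rfl⟩
    have hrepr : v i = ∑ m : Fin (n i), ((b i).repr ⟨v i, hv⟩ m) • ((b i m : A i) : V i) := by
      have h2 := congrArg (Submodule.subtype (A i)) ((b i).sum_repr ⟨v i, hv⟩)
      simpa only [map_sum, map_smul, Submodule.subtype_apply] using h2.symm
    have hexp : PiTensorProduct.tprod F v =
        ∑ m : Fin (n i), ((b i).repr ⟨v i, hv⟩ m) •
          PiTensorProduct.tprod F (Function.update v i ((b i m : A i) : V i)) := by
      conv_lhs => rw [← Function.update_eq_self i v]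
      conv_lhs => rw [hrepr]
      rw [MultilinearMap.map_update_sum]
      congr 1; funext m
      exact MultilinearMap.map_update_smul _ v i _ _
    rw [SetLike.mem_coe, hexp]
    apply Submodule.sum_mem
    intro m _
    apply Submodule.smul_mem
    apply SetLike.le_def.mp (le_iSup _ (⟨i, m⟩ : Σ i : Fin d, Fin (n i)))
    exact Submodule.subset_span ⟨_, by simp, rfl⟩
  have hT : T ∈ ⨆ p : Σ i : Fin d, Fin (n i), sliceSpan p.1 ((b p.1 p.2 : A p.1) : V p.1) :=
    (iSup_le hsub) h
  rw [Submodule.mem_iSup_iff_exists_finsupp] at hT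
  obtain ⟨f, hf, hfsum⟩ := hT
  have hcard : Fintype.card (Σ i : Fin d, Fin (n i)) = ∑ i, n i := by
    simp [Fintype.card_sigma]
  set e : Fin (∑ i, n i) ≃ (Σ i : Fin d, Fin (n i)) :=
    (Fintype.equivFinOfCardEq hcard).symm with he
  refine ⟨fun m => f (e m),
    fun m => ⟨(e m).1, ((b (e m).1 (e m).2 : A (e m).1) : V (e m).1), hf (e m)⟩, ?_⟩
  rw [← hfsum, Finsupp.sum_fintype _ _ (fun _ => rfl)]
  exact (Equiv.sum_comp e (fun p => f p)).symm

lemma sliceRank_le_sum_finrank (A : ∀ i, Submodule F (V i))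
    [∀ i, FiniteDimensional F (V i)]
    (T : ⨂[F] i, V i) (h : T ∈ ⨆ i, sliceSub i (A i)) :
    tensorSliceRank F V T ≤ ∑ i, Module.finrank F (A i) :=
  Nat.sInf_le (mem_rank_set_of_mem_iSup A T h)

/-- Extraction: subspaces realizing the slice rank. -/
lemma exists_subspaces (hd : 0 < d) [∀ i, FiniteDimensional F (V i)] (T : ⨂[F] i, V i) :
    ∃ A : ∀ i, Submodule F (V i), (∑ i, Module.finrank F (A i) ≤ tensorSliceRank F V T) ∧
      T ∈ ⨆ i, sliceSub i (A i) := by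
  classical
  set RS := {r | ∃ S : Fin r → ⨂[F] i, V i,
    (∀ j, ∃ i : Fin d, ∃ u : V i,
      S j ∈ Submodule.span F {t | ∃ v : ∀ k, V k, v i = u ∧ t = PiTensorProduct.tprod F v}) ∧
    T = ∑ j, S j} with hRS
  have hne : RS.Nonempty := by
    set i0 : Fin d := ⟨0, hd⟩
    have hT : T ∈ ⨆ i, sliceSub i (⊤ : Submodule F (V i)) := by
      apply SetLike.le_def.mp (le_iSup _ i0)
      have : sliceSub (F := F) i0 (⊤ : Submodule F (V i0)) = ⊤ := by
        rw [eq_top_iff, ← PiTensorProduct.span_tprod_eq_top]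
        apply Submodule.span_mono
        rintro t ⟨v, rfl⟩
        exact ⟨v, trivial, rfl⟩
      rw [this]; trivial
    exact ⟨_, mem_rank_set_of_mem_iSup _ T hT⟩
  have hmem : tensorSliceRank F V T ∈ RS := Nat.sInf_mem hne
  set r₀ := tensorSliceRank F V T
  obtain ⟨S, hS, hsum⟩ := hmem
  choose idx u hu using hS
  set A : ∀ i, Submodule F (V i) := fun i =>
    ⨆ (l : Fin r₀) (h : idx l = i), Submodule.span F {cast (congrArg V h) (u l)} with hA
  refine ⟨A, ?_, ?_⟩
  · -- dimension count
    have h1 : ∀ i, Module.finrank F (A i) ≤ Fintype.card {l // idx l = i} := by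
      intro i
      have hle : A i ≤ Submodule.span F
          (Set.range (fun p : {l // idx l = i} => cast (congrArg V p.2) (u p.1))) := by
        rw [hA]
        refine iSup_le fun l => iSup_le fun h => ?_
        refine Submodule.span_mono ?_
        rintro x rfl
        exact ⟨⟨l, h⟩, rfl⟩
      calc Module.finrank F (A i)
          ≤ Module.finrank F (Submodule.span F
            (Set.range (fun p : {l // idx l = i} => cast (congrArg V p.2) (u p.1)))) :=
            Submodule.finrank_mono hle
        _ ≤ _ := by
            have := finrank_span_le_card (R := F)
              (Set.range (fun p : {l // idx l = i} => cast (congrArg V p.2) (u p.1)))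
            refine this.trans ?_
            rw [Set.toFinset_range]
            exact (Finset.card_image_le).trans (by simp)
    calc ∑ i, Module.finrank F (A i) ≤ ∑ i, Fintype.card {l // idx l = i} :=
          Finset.sum_le_sum fun i _ => h1 i
      _ = r₀ := by
          rw [← Fintype.card_sigma]
          rw [Fintype.card_congr (Equiv.sigmaFiberEquiv idx)]
          simp
  · rw [hsum]
    apply Submodule.sum_mem
    intro l _
    apply SetLike.le_def.mp (le_iSup _ (idx l))
    refine SetLike.le_def.mp (sliceSpan_le_sliceSub (idx l) (u l) (A (idx l)) ?_) (hu l)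
    have : Submodule.span F {cast (congrArg V (rfl : idx l = idx l)) (u l)} ≤ A (idx l) := by
      rw [hA]
      exact le_iSup₂ (f := fun l' (h : idx l' = idx l) =>
        Submodule.span F {cast (congrArg V h) (u l')}) l rfl
    exact this (Submodule.mem_span_singleton_self _)

section Counting

open Module

variable {E : Type*} [AddCommGroup E] [Module F E] [FiniteDimensional F E]

lemma le_biSup' {ι : Sort*} {P : ι → Prop} (W : ι → Submodule F E) {l : ι} (h : P l) :
    W l ≤ ⨆ (l' : ι) (_ : P l'), W l' :=
  le_iSup₂ (f := fun l' (_ : P l') => W l') l h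

lemma finrank_sum_of_isInternal {k : ℕ} (Wk : Fin k → Submodule F E)
    (h : DirectSum.IsInternal Wk) : ∑ j, finrank F (Wk j) = finrank F E := by
  classical
  let b := h.collectedBasis (fun j => Module.finBasis F (Wk j))
  rw [Module.finrank_eq_card_basis b, Fintype.card_sigma]
  simp

lemma counting_lt {k : ℕ} (Wk : Fin k → Submodule F E) (h : DirectSum.IsInternal Wk)
    (A : Submodule F E) :
    ∑ j : Fin k, finrank F ↥(Wk j ⊓ (A ⊔ ⨆ (l : Fin k) (_ : (l : ℕ) < (j : ℕ)), Wk l))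
      ≤ finrank F A := by
  classical
  set f : ℕ → ℕ := fun m => finrank F ↥(A ⊔ ⨆ (l : Fin k) (_ : (l : ℕ) < m), Wk l) with hf
  set g : Fin k → ℕ := fun j =>
    finrank F ↥(Wk j ⊓ (A ⊔ ⨆ (l : Fin k) (_ : (l : ℕ) < (j : ℕ)), Wk l)) with hg
  have hN0 : f 0 = finrank F A := by
    rw [hf]; beta_reduce
    have : (⨆ (l : Fin k) (_ : (l : ℕ) < 0), Wk l) = ⊥ :=
      le_antisymm (iSup₂_le fun l hl => absurd hl (by omega)) bot_le
    rw [this, sup_bot_eq]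
  have hNk : f k = finrank F E := by
    rw [hf]; beta_reduce
    have : (A ⊔ ⨆ (l : Fin k) (_ : (l : ℕ) < k), Wk l) = ⊤ := by
      rw [eq_top_iff, ← h.submodule_iSup_eq_top]
      exact le_sup_of_le_right (iSup_le fun l => le_biSup' Wk l.2)
    rw [this]
    exact finrank_top F E
  have key : ∀ j : Fin k, g j + f ((j : ℕ) + 1) = finrank F (Wk j) + f (j : ℕ) := by
    intro j
    have hsup : Wk j ⊔ (A ⊔ ⨆ (l : Fin k) (_ : (l : ℕ) < (j : ℕ)), Wk l)
        = A ⊔ ⨆ (l : Fin k) (_ : (l : ℕ) < (j : ℕ) + 1), Wk l := by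
      apply le_antisymm
      · apply sup_le
        · exact le_sup_of_le_right (le_biSup' Wk (Nat.lt_succ_self _))
        · exact sup_le le_sup_left (le_sup_of_le_right
            (iSup₂_le fun l hl => le_biSup' Wk (Nat.lt_succ_of_lt hl)))
      · refine sup_le (le_sup_of_le_right le_sup_left) ?_
        refine iSup₂_le fun l hl => ?_
        rcases Nat.lt_succ_iff_lt_or_eq.mp hl with hl' | hl'
        · exact le_sup_of_le_right (le_sup_of_le_right (le_biSup' Wk hl'))
        · have : l = j := Fin.val_injective hl'
          subst this
          exact le_sup_left
    have h2 := Submodule.finrank_sup_add_finrank_inf_eq (Wk j)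
      (A ⊔ ⨆ (l : Fin k) (_ : (l : ℕ) < (j : ℕ)), Wk l)
    rw [hsup] at h2
    rw [hg, hf]
    simp only []
    omega
  have hsum : (∑ j : Fin k, g j) + ∑ j : Fin k, f ((j : ℕ) + 1)
      = (∑ j : Fin k, finrank F (Wk j)) + ∑ j : Fin k, f (j : ℕ) := by
    rw [← Finset.sum_add_distrib, ← Finset.sum_add_distrib]
    exact Finset.sum_congr rfl fun j _ => key j
  have e1 : ∑ j : Fin k, f ((j : ℕ) + 1) = ∑ m ∈ Finset.range k, f (m + 1) :=
    Fin.sum_univ_eq_sum_range (fun m => f (m + 1)) k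
  have e2 : ∑ j : Fin k, f (j : ℕ) = ∑ m ∈ Finset.range k, f m :=
    Fin.sum_univ_eq_sum_range (fun m => f m) k
  have e3 : (∑ m ∈ Finset.range k, f (m + 1)) + f 0
      = (∑ m ∈ Finset.range k, f m) + f k := by
    have h1 := Finset.sum_range_succ f k
    have h2 := Finset.sum_range_succ' f k
    omega
  have e4 : ∑ j : Fin k, finrank F (Wk j) = finrank F E := finrank_sum_of_isInternal Wk h
  have e5 : Finset.univ.sum g = ∑ j : Fin k, g j := rfl
  omega

lemma counting_gt {k : ℕ} (Wk : Fin k → Submodule F E) (h : DirectSum.IsInternal Wk)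
    (A : Submodule F E) :
    ∑ j : Fin k, finrank F ↥(Wk j ⊓ (A ⊔ ⨆ (l : Fin k) (_ : (j : ℕ) < (l : ℕ)), Wk l))
      ≤ finrank F A := by
  classical
  set f : ℕ → ℕ := fun m => finrank F ↥(A ⊔ ⨆ (l : Fin k) (_ : m ≤ (l : ℕ)), Wk l) with hf
  set g : Fin k → ℕ := fun j =>
    finrank F ↥(Wk j ⊓ (A ⊔ ⨆ (l : Fin k) (_ : (j : ℕ) < (l : ℕ)), Wk l)) with hg
  have hN0 : f 0 = finrank F E := by
    rw [hf]; beta_reduce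
    have : (A ⊔ ⨆ (l : Fin k) (_ : 0 ≤ (l : ℕ)), Wk l) = ⊤ := by
      rw [eq_top_iff, ← h.submodule_iSup_eq_top]
      exact le_sup_of_le_right (iSup_le fun l => le_biSup' Wk (Nat.zero_le _))
    rw [this]
    exact finrank_top F E
  have hNk : f k = finrank F A := by
    rw [hf]; beta_reduce
    have : (⨆ (l : Fin k) (_ : k ≤ (l : ℕ)), Wk l) = ⊥ :=
      le_antisymm (iSup₂_le fun l hl => absurd l.2 (by omega)) bot_le
    rw [this, sup_bot_eq]
  have key : ∀ j : Fin k, g j + f (j : ℕ) = finrank F (Wk j) + f ((j : ℕ) + 1) := by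
    intro j
    have hsup : Wk j ⊔ (A ⊔ ⨆ (l : Fin k) (_ : (j : ℕ) < (l : ℕ)), Wk l)
        = A ⊔ ⨆ (l : Fin k) (_ : (j : ℕ) ≤ (l : ℕ)), Wk l := by
      apply le_antisymm
      · apply sup_le
        · exact le_sup_of_le_right (le_biSup' Wk le_rfl)
        · exact sup_le le_sup_left (le_sup_of_le_right
            (iSup₂_le fun l hl => le_biSup' Wk (by omega)))
      · refine sup_le (le_sup_of_le_right le_sup_left) ?_
        refine iSup₂_le fun l hl => ?_
        rcases Nat.lt_or_ge (j : ℕ) (l : ℕ) with hl' | hl'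
        · exact le_sup_of_le_right (le_sup_of_le_right (le_biSup' Wk hl'))
        · have : l = j := Fin.val_injective (by omega)
          subst this
          exact le_sup_left
    have hGidx : (A ⊔ ⨆ (l : Fin k) (_ : (j : ℕ) < (l : ℕ)), Wk l)
        = A ⊔ ⨆ (l : Fin k) (_ : (j : ℕ) + 1 ≤ (l : ℕ)), Wk l := by
      congr 1
    have h2 := Submodule.finrank_sup_add_finrank_inf_eq (Wk j)
      (A ⊔ ⨆ (l : Fin k) (_ : (j : ℕ) < (l : ℕ)), Wk l)
    rw [hsup] at h2
    rw [hg, hf]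
    simp only []
    have hb : finrank F ↥(A ⊔ ⨆ (l : Fin k) (_ : (j : ℕ) + 1 ≤ (l : ℕ)), Wk l)
        = finrank F ↥(A ⊔ ⨆ (l : Fin k) (_ : (j : ℕ) < (l : ℕ)), Wk l) := by
      rw [← hGidx]
    have hc : finrank F ↥(A ⊔ ⨆ (l : Fin k) (_ : (j : ℕ) ≤ (l : ℕ)), Wk l) = f (j : ℕ) := by
      rw [hf]
    omega
  have hsum : (∑ j : Fin k, g j) + ∑ j : Fin k, f (j : ℕ)
      = (∑ j : Fin k, finrank F (Wk j)) + ∑ j : Fin k, f ((j : ℕ) + 1) := by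
    rw [← Finset.sum_add_distrib, ← Finset.sum_add_distrib]
    exact Finset.sum_congr rfl fun j _ => key j
  have e1 : ∑ j : Fin k, f ((j : ℕ) + 1) = ∑ m ∈ Finset.range k, f (m + 1) :=
    Fin.sum_univ_eq_sum_range (fun m => f (m + 1)) k
  have e2 : ∑ j : Fin k, f (j : ℕ) = ∑ m ∈ Finset.range k, f m :=
    Fin.sum_univ_eq_sum_range (fun m => f m) k
  have e3 : (∑ m ∈ Finset.range k, f (m + 1)) + f 0
      = (∑ m ∈ Finset.range k, f m) + f k := by
    have h1 := Finset.sum_range_succ f k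
    have h2 := Finset.sum_range_succ' f k
    omega
  have e4 : ∑ j : Fin k, finrank F (Wk j) = finrank F E := finrank_sum_of_isInternal Wk h
  have e5 : Finset.univ.sum g = ∑ j : Fin k, g j := rfl
  omega

end Counting


end SliceAux

/-- Block upper triangular tensors: the slice rank is at least the sum of the slice ranks
of the diagonal blocks. -/
theorem sliceRank_blockTriangular {F : Type*} [Field F] {d k : ℕ} (hd : 2 ≤ d) (hk : 1 ≤ k)
    (V : Fin d → Type*)
    [∀ i, AddCommGroup (V i)] [∀ i, Module F (V i)] [∀ i, FiniteDimensional F (V i)]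
    (W : ∀ i : Fin d, Fin k → Submodule F (V i))
    (hW : ∀ i, DirectSum.IsInternal (W i))
    (T : ⨂[F] i, V i)
    (Tc : ∀ α : Fin d → Fin k, ⨂[F] i, (W i (α i)))
    (hdecomp : T = ∑ α : Fin d → Fin k,
      PiTensorProduct.map (fun i => (W i (α i)).subtype) (Tc α))
    (htri : ∀ α : Fin d → Fin k, ¬ Monotone α → Tc α = 0) :
    tensorSliceRank F V T ≥ ∑ j : Fin k, tensorSliceRank F (fun i => (W i j)) (Tc fun _ => j) := by
  classical
  open SliceAux Module in
  rw [ge_iff_le]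
  set last : Fin d := ⟨d - 1, by omega⟩ with hlast
  have hle_last : ∀ i : Fin d, i ≤ last := by
    intro i
    rw [Fin.le_def]
    have := i.isLt
    simp only [hlast]
    omega
  obtain ⟨A, hAr, hTA⟩ := exists_subspaces (F := F) (V := V) (by omega) T
  set G : ∀ i : Fin d, Fin k → Submodule F (V i) := fun i j =>
    A i ⊔ (if (i : ℕ) = d - 1 then ⨆ (l : Fin k) (_ : (j : ℕ) < (l : ℕ)), W i l
      else ⨆ (l : Fin k) (_ : (l : ℕ) < (j : ℕ)), W i l) with hG
  -- per-block bound
  have hblock : ∀ j : Fin k, tensorSliceRank F (fun i => (W i j)) (Tc fun _ => j)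
      ≤ ∑ i, finrank F ↥(W i j ⊓ G i j) := by
    intro j
    set φ : ∀ i, ↥(W i j) →ₗ[F] (V i ⧸ G i j) := fun i => (G i j).mkQ ∘ₗ (W i j).subtype
      with hφ
    -- killing indices for non-diagonal components
    have hterm : ∀ α : Fin d → Fin k, α ≠ (fun _ => j) →
        PiTensorProduct.map (fun i => (G i j).mkQ)
          (PiTensorProduct.map (fun i => (W i (α i)).subtype) (Tc α)) = 0 := by
      intro α hα
      by_cases hmono : Monotone α
      · have hi₀ : ∃ i₀ : Fin d, W i₀ (α i₀) ≤ G i₀ j := by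
          by_cases hlj : (j : ℕ) < (α last : ℕ)
          · refine ⟨last, ?_⟩
            rw [hG]
            simp only [hlast]
            rw [if_pos trivial]
            exact le_sup_of_le_right (le_biSup' (W last) hlj)
          · have hi : ∃ i₀ : Fin d, (i₀ : ℕ) ≠ d - 1 ∧ (α i₀ : ℕ) < (j : ℕ) := by
              by_cases hlj2 : (α last : ℕ) < (j : ℕ)
              · refine ⟨⟨0, by omega⟩, by simp; omega, ?_⟩
                have := hmono (hle_last ⟨0, by omega⟩)
                rw [Fin.le_def] at this
                omega
              · have hje : (α last : ℕ) = (j : ℕ) := by omega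
                obtain ⟨i, hi⟩ := Function.ne_iff.mp hα
                have hine : (i : ℕ) ≠ d - 1 := by
                  intro hieq
                  have : i = last := Fin.val_injective (by simpa [hlast] using hieq)
                  rw [this] at hi
                  exact hi (Fin.val_injective hje)
                have hile := hmono (hle_last i)
                rw [Fin.le_def] at hile
                refine ⟨i, hine, ?_⟩
                have : (α i : ℕ) ≠ (j : ℕ) := fun hc => hi (Fin.val_injective hc)
                omega
            obtain ⟨i₀, hne, hlt⟩ := hi
            refine ⟨i₀, ?_⟩
            rw [hG]
            simp only []
            rw [if_neg hne]
            exact le_sup_of_le_right (le_biSup' (W i₀) hlt)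
        obtain ⟨i₀, hle⟩ := hi₀
        rw [← LinearMap.comp_apply, ← PiTensorProduct.map_comp]
        have hzero : (G i₀ j).mkQ ∘ₗ (W i₀ (α i₀)).subtype = 0 := by
          apply LinearMap.ext
          intro x
          simp only [LinearMap.comp_apply, Submodule.subtype_apply, Submodule.mkQ_apply,
            LinearMap.zero_apply, Submodule.Quotient.mk_eq_zero]
          exact hle x.2
        rw [map_eq_zero_of_component _ i₀ hzero]
        simp
      · rw [htri α hmono]
        simp
    -- the diagonal block is killed by φ
    have h0 : PiTensorProduct.map φ (Tc fun _ => j) = 0 := by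
      have h1 : PiTensorProduct.map (fun i => (G i j).mkQ) T
          = PiTensorProduct.map φ (Tc fun _ => j) := by
        rw [hdecomp, map_sum]
        rw [Finset.sum_eq_single (fun _ : Fin d => j) (fun α _ hα => hterm α hα)
          (fun h => absurd (Finset.mem_univ _) h)]
        rw [← LinearMap.comp_apply, ← PiTensorProduct.map_comp]
      have h2 : PiTensorProduct.map (fun i => (G i j).mkQ) T = 0 := by
        have h3 : (⨆ i, sliceSub i (A i)) ≤
            LinearMap.ker (PiTensorProduct.map (fun i => (G i j).mkQ)) := by
          refine iSup_le fun i => sliceSub_le_ker _ i _ ?_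
          rw [Submodule.ker_mkQ]
          exact le_sup_left
        exact h3 hTA
      rw [← h1]
      exact h2
    have hres : (Tc fun _ => j) ∈ ⨆ i, sliceSub i (LinearMap.ker (φ i)) :=
      mem_iSup_sliceSub_of_map_eq_zero φ _ h0
    have hrk := sliceRank_le_sum_finrank (fun i => LinearMap.ker (φ i)) _ hres
    refine hrk.trans (le_of_eq (Finset.sum_congr rfl fun i _ => ?_))
    have hker : LinearMap.ker (φ i) = Submodule.comap (W i j).subtype (G i j) := by
      rw [hφ]
      simp only []
      rw [LinearMap.ker_comp, Submodule.ker_mkQ]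
    beta_reduce
    rw [hker]
    rw [← Submodule.map_comap_subtype]
    exact (Submodule.finrank_map_subtype_eq (W i j) _).symm
  calc ∑ j : Fin k, tensorSliceRank F (fun i => (W i j)) (Tc fun _ => j)
      ≤ ∑ j : Fin k, ∑ i, finrank F ↥(W i j ⊓ G i j) :=
        Finset.sum_le_sum fun j _ => hblock j
    _ = ∑ i, ∑ j : Fin k, finrank F ↥(W i j ⊓ G i j) := Finset.sum_comm
    _ ≤ ∑ i, finrank F (A i) := by
        refine Finset.sum_le_sum fun i _ => ?_
        by_cases hi : (i : ℕ) = d - 1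
        · have : ∀ j : Fin k, W i j ⊓ G i j
              = W i j ⊓ (A i ⊔ ⨆ (l : Fin k) (_ : (j : ℕ) < (l : ℕ)), W i l) := by
            intro j
            rw [hG]
            simp only []
            rw [if_pos hi]
          rw [Finset.sum_congr rfl fun j _ => by rw [this j]]
          exact counting_gt (W i) (hW i) (A i)
        · have : ∀ j : Fin k, W i j ⊓ G i j
              = W i j ⊓ (A i ⊔ ⨆ (l : Fin k) (_ : (l : ℕ) < (j : ℕ)), W i l) := by
            intro j
            rw [hG]
            simp only []
            rw [if_neg hi]
          rw [Finset.sum_congr rfl fun j _ => by rw [this j]]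
          exact counting_lt (W i) (hW i) (A i)
    _ ≤ tensorSliceRank F V T := hAr
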